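/- Let S be a finite semigroup that is a strict left regular band of groups, with idempotent-power map ω (so ω(s·t) = (ω s)·(ω t) for all s,t). Then for s, t ∈ S: s ≤ t if and only if there exists an idempotent y ∈ S with (ω s)·y = y and t = y·s; moreover, in that case also t = s·y. -/
import Mathlib

private lemma lrbg_idem_iter {S : Type*} [Semigroup S] (e : S) (he : e * e = e) :
    ∀ n : ℕ, (fun t => t * e)^[n] e = e := by
  intro n
  induction n with
  | zero => rfl
  | succ k ih => rw [Function.iterate_succ_apply', ih, he]

private lemma lrbg_swap_iter {S : Type*} [Semigroup S] (s : S) :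
    ∀ n : ℕ, s * (fun t => t * s)^[n] s = (fun t => t * s)^[n] s * s := by
  intro n
  induction n with
  | zero => rfl
  | succ k ih =>
      rw [Function.iterate_succ_apply', ← mul_assoc, ih]

private lemma lrbg_comm {S : Type*} [Semigroup S]
    (ω : S → S)
    (hpow : ∀ s : S, ∃ n : ℕ, ω s = (fun t => t * s)^[n] s)
    (lrbg1 : ∀ s : S, ω s * s = s)
    (lrbg2 : ∀ s t : S, s * t * ω s = s * t)
    (hstrict : ∀ s t : S, ω (s * t) = ω s * ω t)
    (s y : S) (hy : y * y = y) (hsy : ω s * y = y) : s * y = y * s := by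
  have hωy : ω y = y := by
    obtain ⟨n, hn⟩ := hpow y
    rw [hn, lrbg_idem_iter y hy]
  have h1 : y * s * y = y * s := by
    have := lrbg2 y s; rwa [hωy] at this
  have h2 : ω (s * y) = y := by rw [hstrict, hωy, hsy]
  have h3 : y * (s * y) = s * y := by
    have := lrbg1 (s * y); rwa [h2] at this
  rw [← mul_assoc] at h3
  rw [← h3, h1]

/-- In a finite *strict* LRBG, `s ≤ t` iff `t = y·s` for some
idempotent `y` with `(ω s)·y = y`; moreover in that case also `t = s·y`. -/
theorem strict_lrbg_le_characterization {S : Type*} [Semigroup S] [Fintype S]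
    (ω : S → S)
    (hidem : ∀ s : S, ω s * ω s = ω s)
    (hpow : ∀ s : S, ∃ n : ℕ, ω s = (fun t => t * s)^[n] s)
    (lrbg1 : ∀ s : S, ω s * s = s)
    (lrbg2 : ∀ s t : S, s * t * ω s = s * t)
    (hstrict : ∀ s t : S, ω (s * t) = ω s * ω t) :
    ∀ s t : S,
      (s * ω t = t ↔ ∃ y : S, y * y = y ∧ ω s * y = y ∧ t = y * s) ∧
      (∀ y : S, y * y = y → ω s * y = y → t = y * s → t = s * y) := by
  intro s t
  have hωω : ∀ u : S, ω (ω u) = ω u := by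
    intro u
    obtain ⟨n, hn⟩ := hpow (ω u)
    rw [hn, lrbg_idem_iter (ω u) (hidem u)]
  constructor
  · constructor
    · intro h
      obtain ⟨v, hv1, hv2⟩ : ∃ v : S, s * v = ω s ∧ v * s = ω s := by
        obtain ⟨n, hn⟩ := hpow s
        cases n with
        | zero =>
            simp only [Function.iterate_zero_apply] at hn
            have hss : s * s = s := by have := lrbg1 s; rwa [hn] at this
            exact ⟨s, by rw [hss, hn], by rw [hss, hn]⟩
        | succ k =>
            refine ⟨(fun t => t * s)^[k] s, ?_, ?_⟩
            · rw [lrbg_swap_iter s k, hn]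
              exact (Function.iterate_succ_apply' (fun t => t * s) k s).symm
            · rw [hn]
              exact (Function.iterate_succ_apply' (fun t => t * s) k s).symm
      have hωst : ω s * ω t = ω t := by
        have h2 := hstrict s (ω t)
        rw [h, hωω] at h2
        exact h2.symm
      refine ⟨t * v, ?_, ?_, ?_⟩
      · have hvt : v * t = ω t := by
          conv_lhs => rw [← h]
          rw [← mul_assoc, hv2, hωst]
        have htωt : t * ω t = t := by
          calc t * ω t = s * ω t * ω t := by rw [h]
            _ = s * (ω t * ω t) := mul_assoc _ _ _
            _ = s * ω t := by rw [hidem]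
            _ = t := h
        calc t * v * (t * v) = t * (v * t) * v := by simp [mul_assoc]
          _ = t * ω t * v := by rw [hvt]
          _ = t * v := by rw [htωt]
      · have hst : ω s * t = t := by
          conv_lhs => rw [← h, ← mul_assoc, lrbg1]
          exact h
        rw [← mul_assoc, hst]
      · rw [mul_assoc, hv2, ← h, lrbg2]
    · rintro ⟨y, hy, hsy, rfl⟩
      have hωy : ω y = y := by
        obtain ⟨n, hn⟩ := hpow y
        rw [hn, lrbg_idem_iter y hy]
      have hcomm := lrbg_comm ω hpow lrbg1 lrbg2 hstrict s y hy hsy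
      rw [hstrict, hωy, ← mul_assoc, lrbg2, hcomm]
  · intro y hy hsy ht
    have hcomm := lrbg_comm ω hpow lrbg1 lrbg2 hstrict s y hy hsy
    rw [ht, ← hcomm]
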